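/- Under the hypotheses of the almost subadditive ergodic theorem together with the additional assumption that for every k, (1/n)·(f_{nk} - Σ_{i=0}^{n-1} f_k∘(θ_k)^i)^+ → 0 a.s., and each θ_k measure-preserving and the Birkhoff averages (1/n)Σ_{i<n} f_k∘(θ_k)^i converging a.s. and in L^1 to E[f_k | I_k], one has E[limsup_{n→∞} f_n/n] ≤ E[f_k]/k for every k, and hence E[limsup f_n/n] ≤ μ = lim E[f_n]/n. -/

import Mathlib

open MeasureTheory Filter



namespace AlmostSubadditiveAux


open ENNReal

variable {Ω : Type*} [MeasurableSpace Ω] {μ : Measure Ω}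

lemma tail_tsum_ne_top [IsFiniteMeasure μ] {X : Ω → ℝ} (hXm : Measurable X)
    (hXi : Integrable X μ) {ε : ℝ} (hε : 0 < ε) :
    (∑' m : ℕ, μ {ω | ε * m < |X ω|}) ≠ ∞ := by
  have hmeas : ∀ m : ℕ, MeasurableSet {ω | ε * m < |X ω|} := fun m =>
    measurableSet_lt measurable_const hXm.abs
  have h2 : (∑' m : ℕ, μ {ω | ε * m < |X ω|})
      = ∫⁻ ω, ∑' m : ℕ, Set.indicator {ω | ε * m < |X ω|} (1 : Ω → ℝ≥0∞) ω ∂μ :=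
    calc (∑' m : ℕ, μ {ω | ε * m < |X ω|})
        = ∑' m : ℕ, ∫⁻ ω, Set.indicator {ω | ε * m < |X ω|} (1 : Ω → ℝ≥0∞) ω ∂μ :=
          tsum_congr fun m => (lintegral_indicator_one (hmeas m)).symm
      _ = _ := (lintegral_tsum (fun m => ((measurable_one.indicator (hmeas m)).aemeasurable))).symm
  rw [h2]
  have hpt : ∀ ω, (∑' m : ℕ, Set.indicator {ω | ε * m < |X ω|} (1 : Ω → ℝ≥0∞) ω)
      ≤ ENNReal.ofReal (|X ω| / ε) + 1 := by
    intro ω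
    set N : ℕ := ⌈|X ω| / ε⌉₊ with hN
    have hvan : ∀ m : ℕ, m ∉ Finset.range N →
        Set.indicator {ω | ε * m < |X ω|} (1 : Ω → ℝ≥0∞) ω = 0 := by
      intro m hm
      rw [Finset.mem_range, not_lt] at hm
      apply Set.indicator_of_notMem
      simp only [Set.mem_setOf_eq, not_lt]
      have h3 : (|X ω| / ε) ≤ (m : ℝ) := le_trans (Nat.le_ceil _) (by exact_mod_cast hm)
      calc |X ω| = (|X ω| / ε) * ε := by field_simp
        _ ≤ (m : ℝ) * ε := mul_le_mul_of_nonneg_right h3 hε.le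
        _ = ε * m := by ring
    rw [tsum_eq_sum hvan]
    calc ∑ m ∈ Finset.range N, Set.indicator {ω | ε * m < |X ω|} (1 : Ω → ℝ≥0∞) ω
        ≤ ∑ _m ∈ Finset.range N, (1 : ℝ≥0∞) := by
          apply Finset.sum_le_sum
          intro i _
          exact Set.indicator_le_self _ _ ω
      _ = (N : ℝ≥0∞) := by simp
      _ = ENNReal.ofReal (N : ℝ) := by rw [ENNReal.ofReal_natCast]
      _ ≤ ENNReal.ofReal (|X ω| / ε + 1) := by
          apply ENNReal.ofReal_le_ofReal
          exact (Nat.ceil_lt_add_one (by positivity)).le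
      _ ≤ ENNReal.ofReal (|X ω| / ε) + 1 := by
          simpa using ENNReal.ofReal_add_le (p := |X ω| / ε) (q := 1)
  refine ne_of_lt (lt_of_le_of_lt (lintegral_mono hpt) ?_)
  have hstep : (∫⁻ ω, (ENNReal.ofReal (|X ω| / ε) + 1) ∂μ)
      = (∫⁻ ω, ENNReal.ofReal (|X ω| / ε) ∂μ) + μ Set.univ := by
    rw [lintegral_add_right _ measurable_const, lintegral_one]
  rw [hstep]
  apply ENNReal.add_lt_top.2
  refine ⟨?_, measure_lt_top μ _⟩
  have hint := ((hXi.abs).div_const ε).2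
  refine lt_of_le_of_lt (lintegral_mono fun ω => ?_) hint
  rw [Real.enorm_eq_ofReal_abs]
  exact ENNReal.ofReal_le_ofReal (le_abs_self _)

lemma ae_eventually_comp_le [IsProbabilityMeasure μ] {X : Ω → ℝ} (hXm : Measurable X)
    (hXi : Integrable X μ) (T : ℕ → Ω → Ω) (hT : ∀ m, MeasurePreserving (T m) μ μ) :
    ∀ᵐ ω ∂μ, ∀ j : ℕ, ∀ᶠ m : ℕ in atTop, |X (T m ω)| ≤ m / (j + 1) := by
  rw [ae_all_iff]
  intro j
  have hε : (0 : ℝ) < 1 / (j + 1) := by positivity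
  have hsum : (∑' m : ℕ, μ {ω | (m : ℝ) / (j + 1) < |X (T m ω)|}) ≠ ∞ := by
    have heq : ∀ m : ℕ, μ {ω | (m : ℝ) / (j + 1) < |X (T m ω)|}
        = μ {ω | (1 / (j + 1) : ℝ) * m < |X ω|} := by
      intro m
      have hpre : {ω | (m : ℝ) / (j + 1) < |X (T m ω)|}
          = T m ⁻¹' {ω | (1 / (j + 1) : ℝ) * m < |X ω|} := by
        ext ω
        simp only [Set.mem_preimage, Set.mem_setOf_eq, one_div_mul_eq_div]
      rw [hpre, (hT m).measure_preimage
        ((measurableSet_lt measurable_const hXm.abs).nullMeasurableSet)]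
    calc (∑' m : ℕ, μ {ω | (m : ℝ) / (j + 1) < |X (T m ω)|})
        = ∑' m : ℕ, μ {ω | (1 / (j + 1) : ℝ) * m < |X ω|} := by
          congr 1; ext m; exact heq m
      _ ≠ ∞ := tail_tsum_ne_top hXm hXi hε
  filter_upwards [ae_eventually_notMem hsum] with ω hω
  filter_upwards [hω] with m hm
  simp only [Set.mem_setOf_eq, not_lt] at hm
  exact hm



variable {Ω : Type*} [MeasurableSpace Ω] {μ : Measure Ω}

lemma ae_eventually_r_le [IsProbabilityMeasure μ] {R : ℕ → Ω → ℝ} {α : ℝ} (hα : 1 < α)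
    {c : ℝ} (hc : 0 ≤ c)
    (hR : ∀ m : ℕ, 1 ≤ m → ∫⁻ ω, ENNReal.ofReal (max (R m ω) 0 ^ α) ∂μ ≤ ENNReal.ofReal c)
    (hRmeas : ∀ m, Measurable (R m)) :
    ∀ᵐ ω ∂μ, ∀ j : ℕ, ∀ᶠ m : ℕ in atTop, R m ω ≤ m / (j + 1) := by
  rw [ae_all_iff]
  intro j
  have hα0 : (0 : ℝ) < α := lt_trans one_pos hα
  have hsum : (∑' m : ℕ, μ {ω | (m : ℝ) / (j + 1) < R m ω}) ≠ ∞ := by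
    have hbound : ∀ m : ℕ, 1 ≤ m → μ {ω | (m : ℝ) / (j + 1) < R m ω}
        ≤ ENNReal.ofReal (c / ((m : ℝ) / (j + 1)) ^ α) := by
      intro m hm
      set t : ℝ := (m : ℝ) / (j + 1) with ht
      have ht0 : 0 < t := by
        apply div_pos _ (by positivity)
        exact_mod_cast hm
      have htα : 0 < t ^ α := Real.rpow_pos_of_pos ht0 α
      have hsub : {ω | t < R m ω}
          ⊆ {ω | ENNReal.ofReal (t ^ α) ≤ ENNReal.ofReal (max (R m ω) 0 ^ α)} := by
        intro ω hω
        simp only [Set.mem_setOf_eq] at hω ⊢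
        apply ENNReal.ofReal_le_ofReal
        apply Real.rpow_le_rpow ht0.le _ hα0.le
        exact le_max_of_le_left hω.le
      have hcheb := mul_meas_ge_le_lintegral₀
        (μ := μ) (f := fun ω => ENNReal.ofReal (max (R m ω) 0 ^ α))
        (((hRmeas m).max measurable_const).pow_const α |>.ennreal_ofReal.aemeasurable)
        (ENNReal.ofReal (t ^ α))
      have h1 : μ {ω | t < R m ω}
          ≤ μ {ω | ENNReal.ofReal (t ^ α) ≤ ENNReal.ofReal (max (R m ω) 0 ^ α)} :=
        measure_mono hsub
      have h2 : ENNReal.ofReal (t ^ α) * μ {ω | t < R m ω} ≤ ENNReal.ofReal c :=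
        le_trans (mul_le_mul_right h1 _) (le_trans hcheb (hR m hm))
      have h3 : μ {ω | t < R m ω} ≤ ENNReal.ofReal c / ENNReal.ofReal (t ^ α) := by
        rw [ENNReal.le_div_iff_mul_le (Or.inl (by simp [ENNReal.ofReal_pos, htα]))
          (Or.inl ENNReal.ofReal_ne_top)]
        rwa [mul_comm]
      rwa [← ENNReal.ofReal_div_of_pos htα] at h3
    rw [tsum_eq_zero_add' ENNReal.summable]
    apply ENNReal.add_ne_top.2
    constructor
    · exact (measure_lt_top μ _).ne
    · have hle : (∑' m : ℕ, μ {ω | ((m + 1 : ℕ) : ℝ) / (j + 1) < R (m + 1) ω})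
          ≤ ∑' m : ℕ, ENNReal.ofReal (c / (((m : ℝ) + 1) / (j + 1)) ^ α) := by
        apply ENNReal.tsum_le_tsum
        intro m
        have := hbound (m + 1) (Nat.le_add_left 1 m)
        push_cast at this ⊢
        exact this
      refine ne_of_lt (lt_of_le_of_lt hle ?_)
      have hsummable : Summable (fun m : ℕ => c / (((m : ℝ) + 1) / (j + 1)) ^ α) := by
        have h1 : Summable (fun m : ℕ => 1 / ((m : ℝ) + 1) ^ α) := by
          have := (Real.summable_one_div_nat_rpow (p := α)).2 hα
          have h2 := (summable_nat_add_iff (f := fun n : ℕ => 1 / (n : ℝ) ^ α) 1).2 this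
          simpa using h2
        have h3 := h1.mul_left (c * ((j : ℝ) + 1) ^ α)
        apply h3.congr
        intro m
        rw [Real.div_rpow (by positivity) (by positivity)]
        field_simp
      rw [← ENNReal.ofReal_tsum_of_nonneg (fun m => by positivity) hsummable]
      exact ENNReal.ofReal_lt_top
  filter_upwards [ae_eventually_notMem hsum] with ω hω
  filter_upwards [hω] with m hm
  simp only [Set.mem_setOf_eq, not_lt] at hm
  exact hm




lemma assembleLemma {k : ℕ} (hk : 1 ≤ k) {F S : ℕ → ℝ} {φ : ℝ}
    (hS : Tendsto (fun m : ℕ => S m / m) atTop (nhds φ))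
    (H : ∀ δ : ℝ, 0 < δ → ∀ᶠ m : ℕ in atTop, ∀ s : ℕ, s < k → F (m * k + s) ≤ S m + δ * m) :
    ∀ ε : ℝ, 0 < ε → ∀ᶠ n : ℕ in atTop, F n / n ≤ φ / k + ε := by
  intro ε hε
  have hk0 : (0 : ℝ) < k := by exact_mod_cast hk
  have hk1 : (1 : ℝ) ≤ k := by exact_mod_cast hk
  set δ : ℝ := min 1 (ε * k / 4) with hδdef
  have hδ : 0 < δ := lt_min one_pos (by positivity)
  have hδ1 : δ ≤ 1 := min_le_left _ _
  have hδ2 : δ ≤ ε * k / 4 := min_le_right _ _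
  have h2 : ∀ᶠ m : ℕ in atTop, |S m / m - φ| < δ := by
    have := Metric.tendsto_atTop.1 hS δ hδ
    obtain ⟨N, hN⟩ := this
    rw [eventually_atTop]
    exact ⟨N, fun m hm => by simpa [Real.dist_eq] using hN m hm⟩
  have h3 : Tendsto (fun m : ℕ => (|φ| + 2) / ((k : ℝ) * ((m : ℝ) + 1))) atTop (nhds 0) := by
    apply Tendsto.div_atTop tendsto_const_nhds
    apply Tendsto.const_mul_atTop hk0
    exact tendsto_atTop_add_const_right _ _ tendsto_natCast_atTop_atTop
  have h3ev : ∀ᶠ m : ℕ in atTop, (|φ| + 2) / ((k : ℝ) * ((m : ℝ) + 1)) < ε / 2 :=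
    h3.eventually_lt_const (by positivity)
  have hcomb := ((H δ hδ).and (h2.and h3ev)).and (eventually_ge_atTop 1)
  rw [eventually_atTop] at hcomb
  obtain ⟨N₀, hN₀⟩ := hcomb
  rw [eventually_atTop]
  refine ⟨k * (N₀ + 1), fun n hn => ?_⟩
  have hkpos : 0 < k := hk
  set m : ℕ := n / k with hm
  set s : ℕ := n % k with hs
  have hmN : N₀ + 1 ≤ m := (Nat.le_div_iff_mul_le hkpos).2 (by linarith [hn, Nat.mul_comm k (N₀+1)])
  obtain ⟨⟨hQ, hA, h3m⟩, hm1⟩ := hN₀ m (le_trans (Nat.le_succ N₀) hmN)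
  have hsk : s < k := Nat.mod_lt _ hkpos
  have hnmk : n = m * k + s := by
    rw [hm, hs, Nat.mul_comm]
    exact (Nat.div_add_mod n k).symm
  -- real facts
  have hm1R : (1 : ℝ) ≤ m := by exact_mod_cast hm1
  have hMK : (m : ℝ) * k ≤ n := by
    have : m * k ≤ n := by rw [hnmk]; exact Nat.le_add_right _ _
    exact_mod_cast this
  have hNle : (n : ℝ) ≤ (k : ℝ) * ((m : ℝ) + 1) := by
    have : n ≤ k * (m + 1) := by
      rw [hnmk]
      calc m * k + s ≤ m * k + k := by omega
        _ = k * (m + 1) := by ring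
    calc (n : ℝ) ≤ ((k * (m + 1) : ℕ) : ℝ) := by exact_mod_cast this
      _ = (k : ℝ) * ((m : ℝ) + 1) := by push_cast; ring
  have hn0 : (0 : ℝ) < n := lt_of_lt_of_le (by positivity) hMK
  have hFn : F n ≤ S m + δ * m := by
    rw [hnmk]; exact hQ s hsk
  set A : ℝ := S m / m with hA'
  have hSm : S m = (m : ℝ) * A := by
    rw [hA']; field_simp
  set X : ℝ := A + δ with hX
  have key : (m : ℝ) * X / n ≤ X / k + |X| / ((k : ℝ) * ((m : ℝ) + 1)) := by
    rcases le_or_gt 0 X with hX0 | hX0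
    · have h1 : (m : ℝ) * X / n ≤ (m : ℝ) * X / ((m : ℝ) * k) := by
        apply div_le_div_of_nonneg_left (by positivity) (by positivity) hMK
      have h2 : (m : ℝ) * X / ((m : ℝ) * k) = X / k := by
        rw [mul_div_mul_left _ _ (by linarith : (m : ℝ) ≠ 0)]
      have h4 : 0 ≤ |X| / ((k : ℝ) * ((m : ℝ) + 1)) := by positivity
      linarith
    · have hD : (0 : ℝ) < (k : ℝ) * ((m : ℝ) + 1) := by positivity
      have h1 : (m : ℝ) * X / n ≤ (m : ℝ) * X / ((k : ℝ) * ((m : ℝ) + 1)) := by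
        rw [div_le_div_iff₀ hn0 hD]
        have hmX : (m : ℝ) * X ≤ 0 := mul_nonpos_of_nonneg_of_nonpos (by positivity) hX0.le
        nlinarith
      have h2 : (m : ℝ) * X / ((k : ℝ) * ((m : ℝ) + 1))
          = X / k + |X| / ((k : ℝ) * ((m : ℝ) + 1)) := by
        rw [abs_of_neg hX0]
        field_simp
        ring
      linarith
  have hXle : X ≤ φ + 2 * δ := by
    have := abs_lt.1 hA
    rw [hX]; linarith [this.2]
  have hXabs : |X| ≤ |φ| + 2 := by
    have h5 : |A| ≤ |φ| + δ := by
      have := abs_lt.1 hA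
      rcases abs_cases A with ⟨h6, _⟩ | ⟨h6, _⟩ <;> rcases abs_cases φ with ⟨h7, _⟩ | ⟨h7, _⟩ <;>
        linarith [this.1, this.2]
    calc |X| ≤ |A| + |δ| := abs_add_le _ _
      _ ≤ (|φ| + δ) + δ := by rw [abs_of_pos hδ]; linarith
      _ ≤ |φ| + 2 := by linarith
  calc F n / n ≤ (S m + δ * m) / n := by
        gcongr
    _ = (m : ℝ) * X / n := by rw [hSm, hX]; ring_nf
    _ ≤ X / k + |X| / ((k : ℝ) * ((m : ℝ) + 1)) := key
    _ ≤ (φ + 2 * δ) / k + (|φ| + 2) / ((k : ℝ) * ((m : ℝ) + 1)) := by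
        gcongr
    _ ≤ (φ / k + ε / 2) + ε / 2 := by
        have h8 : (φ + 2 * δ) / k = φ / k + 2 * δ / k := by ring
        have h9 : 2 * δ / k ≤ ε / 2 := by
          rw [div_le_iff₀ hk0]
          nlinarith
        linarith [h3m.le]
    _ = φ / k + ε := by ring


end AlmostSubadditiveAux

open AlmostSubadditiveAux ENNReal in
/-- Upper-bound half of the almost-sure convergence in the almost subadditive ergodic
theorem: `E[limsup f_n/n] ≤ E[f_k]/k` for every `k ≥ 1`, hence `E[limsup f_n/n] ≤ μ`. -/
theorem limsup_expectation_bound_almost_subadditive {Ω : Type*} [MeasurableSpace Ω]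
    (μ : Measure Ω) [IsProbabilityMeasure μ]
    (θ : ℕ → Ω → Ω) (hθ : ∀ n, MeasurePreserving (θ n) μ μ)
    (f g : ℕ → Ω → ℝ) (r : ℕ → ℕ → Ω → ℝ)
    (hfmeas : ∀ n, Measurable (f n)) (hf : ∀ n, Integrable (f n) μ)
    (hg0 : ∀ p ω, 0 ≤ g p ω) (hgint : ∀ p, Integrable (g p) μ)
    (hgE : Tendsto (fun p : ℕ => (∫ ω, g p ω ∂μ) / p) atTop (nhds 0))
    (hgas : ∀ᵐ ω ∂μ, Tendsto (fun p : ℕ => g p ω / p) atTop (nhds 0))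
    (α : ℝ) (hα : 1 < α) (C : ℕ → ℝ) (hC0 : ∀ p, 0 ≤ C p)
    (hr : ∀ n p, 1 ≤ n → 1 ≤ p →
      ∫⁻ ω, ENNReal.ofReal (max (r n p ω) 0 ^ α) ∂μ ≤ ENNReal.ofReal (C p))
    (hrmeas : ∀ n p, Measurable (r n p))
    (hCsum : Summable fun p : ℕ => C p / (p : ℝ) ^ α)
    (hsub : ∀ n p, 1 ≤ n → 1 ≤ p → ∀ ω,
      f (n + p) ω ≤ f n ω + f p (θ n ω) + g p (θ n ω) + r n p ω)
    (hc : BddBelow (Set.range fun n : ℕ => (∫ ω, f (n + 1) ω ∂μ) / (n + 1)))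
    (hextra : ∀ k : ℕ, 1 ≤ k → ∀ᵐ ω ∂μ,
      Tendsto (fun n : ℕ =>
        max (f (n * k) ω - ∑ i ∈ Finset.range n, f k ((θ k)^[i] ω)) 0 / n)
        atTop (nhds 0))
    (hbirk : ∀ k : ℕ, 1 ≤ k → ∃ φ : Ω → ℝ, Integrable φ μ ∧
      (∫ ω, φ ω ∂μ) = (∫ ω, f k ω ∂μ) ∧
      (∀ᵐ ω ∂μ, Tendsto (fun n : ℕ =>
        (∑ i ∈ Finset.range n, f k ((θ k)^[i] ω)) / n) atTop (nhds (φ ω))) ∧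
      Tendsto (fun n : ℕ =>
        ∫ ω, |(∑ i ∈ Finset.range n, f k ((θ k)^[i] ω)) / n - φ ω| ∂μ)
        atTop (nhds 0)) :
    (∀ k : ℕ, 1 ≤ k →
      ∫ ω, atTop.limsup (fun n : ℕ => f n ω / n) ∂μ ≤ (∫ ω, f k ω ∂μ) / k) ∧
    ∀ L : ℝ, Tendsto (fun n : ℕ => (∫ ω, f n ω ∂μ) / n) atTop (nhds L) →
      ∫ ω, atTop.limsup (fun n : ℕ => f n ω / n) ∂μ ≤ L := by
  classical
  -- measurable version of `g`
  have hgae : ∀ p : ℕ, AEMeasurable (g p) μ := fun p => (hgint p).aemeasurable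
  set G : ℕ → Ω → ℝ := fun p => (hgae p).mk (g p) with hGdef
  have hGmeas : ∀ p, Measurable (G p) := fun p => (hgae p).measurable_mk
  have hGeq : ∀ p, g p =ᵐ[μ] G p := fun p => (hgae p).ae_eq_mk
  have hGint : ∀ p, Integrable (G p) μ := fun p => (hgint p).congr (hGeq p)
  have hcompeq : ∀ s N : ℕ, (fun ω => g s (θ N ω)) =ᵐ[μ] (fun ω => G s (θ N ω)) := by
    intro s N
    have h0 : μ {x | ¬ g s x = G s x} = 0 := ae_iff.1 (hGeq s)
    apply ae_iff.2
    have hpre : {ω | ¬ g s (θ N ω) = G s (θ N ω)} = θ N ⁻¹' {x | ¬ g s x = G s x} := rfl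
    rw [hpre]
    exact (hθ N).quasiMeasurePreserving.preimage_null h0
  set ψ : Ω → ℝ := fun ω => atTop.limsup (fun n : ℕ => f n ω / n) with hψdef
  have hψmeas : Measurable ψ := Measurable.limsup (fun n => (hfmeas n).div_const _)
  -- the `K`-bound on positive parts
  set K : ℝ≥0∞ := (∫⁻ ω, ENNReal.ofReal (f 1 ω) ∂μ) + (∫⁻ ω, ENNReal.ofReal (G 1 ω) ∂μ)
      + (1 + ENNReal.ofReal (C 1)) with hK
  have hintf : ∀ (u : Ω → ℝ), Integrable u μ → (∫⁻ ω, ENNReal.ofReal (u ω) ∂μ) ≠ ∞ := by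
    intro u hu
    exact (lt_of_le_of_lt (lintegral_mono fun ω => Real.ofReal_le_enorm _) hu.2).ne
  have hKne : K ≠ ∞ := by
    rw [hK]
    simp [ENNReal.add_ne_top, hintf _ (hf 1), hintf _ (hGint 1), ENNReal.ofReal_ne_top]
  have hrK : ∀ N : ℕ, 1 ≤ N →
      (∫⁻ ω, ENNReal.ofReal (r N 1 ω) ∂μ) ≤ 1 + ENNReal.ofReal (C 1) := by
    intro N hN
    have hpt : ∀ ω, ENNReal.ofReal (r N 1 ω) ≤ 1 + ENNReal.ofReal (max (r N 1 ω) 0 ^ α) := by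
      intro ω
      rcases le_or_gt (r N 1 ω) 1 with h | h
      · calc ENNReal.ofReal (r N 1 ω) ≤ ENNReal.ofReal 1 := ENNReal.ofReal_le_ofReal h
          _ = 1 := ENNReal.ofReal_one
          _ ≤ _ := le_self_add
      · have h1 : (1 : ℝ) ≤ r N 1 ω := h.le
        have hmax : max (r N 1 ω) 0 = r N 1 ω := max_eq_left (by linarith)
        have h2 : r N 1 ω ≤ max (r N 1 ω) 0 ^ α := by
          rw [hmax]
          calc r N 1 ω = r N 1 ω ^ (1 : ℝ) := (Real.rpow_one _).symm
            _ ≤ r N 1 ω ^ α := Real.rpow_le_rpow_of_exponent_le h1 hα.le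
        calc ENNReal.ofReal (r N 1 ω) ≤ ENNReal.ofReal (max (r N 1 ω) 0 ^ α) :=
              ENNReal.ofReal_le_ofReal h2
          _ ≤ _ := le_add_self
    calc (∫⁻ ω, ENNReal.ofReal (r N 1 ω) ∂μ)
        ≤ ∫⁻ ω, (1 + ENNReal.ofReal (max (r N 1 ω) 0 ^ α)) ∂μ := lintegral_mono hpt
      _ = μ Set.univ + ∫⁻ ω, ENNReal.ofReal (max (r N 1 ω) 0 ^ α) ∂μ := by
          rw [lintegral_add_left measurable_const, lintegral_one]
      _ ≤ 1 + ENNReal.ofReal (C 1) := by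
          rw [measure_univ]
          exact add_le_add_right (hr N 1 hN le_rfl) 1
  have hP : ∀ n : ℕ, (∫⁻ ω, ENNReal.ofReal (f (n + 1) ω) ∂μ) ≤ ((n : ℝ≥0∞) + 1) * K := by
    intro n
    induction n with
    | zero =>
      simp only [Nat.cast_zero, zero_add, one_mul]
      rw [hK]
      exact le_self_add.trans le_self_add |>.trans le_rfl
    | succ n ih =>
      have hpt : ∀ᵐ ω ∂μ, ENNReal.ofReal (f (n + 1 + 1) ω) ≤
          ENNReal.ofReal (f (n + 1) ω) + ENNReal.ofReal (f 1 (θ (n + 1) ω))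
          + ENNReal.ofReal (G 1 (θ (n + 1) ω)) + ENNReal.ofReal (r (n + 1) 1 ω) := by
        filter_upwards [hcompeq 1 (n + 1)] with ω hω
        have hs := hsub (n + 1) 1 (by omega) le_rfl ω
        rw [hω] at hs
        calc ENNReal.ofReal (f (n + 1 + 1) ω)
            ≤ ENNReal.ofReal (f (n + 1) ω + f 1 (θ (n + 1) ω) + G 1 (θ (n + 1) ω)
              + r (n + 1) 1 ω) := ENNReal.ofReal_le_ofReal hs
          _ ≤ ENNReal.ofReal (f (n + 1) ω + f 1 (θ (n + 1) ω) + G 1 (θ (n + 1) ω))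
              + ENNReal.ofReal (r (n + 1) 1 ω) := ENNReal.ofReal_add_le
          _ ≤ (ENNReal.ofReal (f (n + 1) ω + f 1 (θ (n + 1) ω))
              + ENNReal.ofReal (G 1 (θ (n + 1) ω))) + ENNReal.ofReal (r (n + 1) 1 ω) :=
              add_le_add_left ENNReal.ofReal_add_le _
          _ ≤ ((ENNReal.ofReal (f (n + 1) ω) + ENNReal.ofReal (f 1 (θ (n + 1) ω)))
              + ENNReal.ofReal (G 1 (θ (n + 1) ω))) + ENNReal.ofReal (r (n + 1) 1 ω) :=
              add_le_add_left (add_le_add_left ENNReal.ofReal_add_le _) _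
      have e1 : (∫⁻ ω, ENNReal.ofReal (f 1 (θ (n + 1) ω)) ∂μ)
          = ∫⁻ ω, ENNReal.ofReal (f 1 ω) ∂μ :=
        (hθ (n + 1)).lintegral_comp ((hfmeas 1).ennreal_ofReal)
      have e2 : (∫⁻ ω, ENNReal.ofReal (G 1 (θ (n + 1) ω)) ∂μ)
          = ∫⁻ ω, ENNReal.ofReal (G 1 ω) ∂μ :=
        (hθ (n + 1)).lintegral_comp ((hGmeas 1).ennreal_ofReal)
      calc (∫⁻ ω, ENNReal.ofReal (f (n + 1 + 1) ω) ∂μ)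
          ≤ ∫⁻ ω, (ENNReal.ofReal (f (n + 1) ω) + ENNReal.ofReal (f 1 (θ (n + 1) ω))
            + ENNReal.ofReal (G 1 (θ (n + 1) ω)) + ENNReal.ofReal (r (n + 1) 1 ω)) ∂μ :=
            lintegral_mono_ae hpt
        _ = (∫⁻ ω, ENNReal.ofReal (f (n + 1) ω) ∂μ)
            + (∫⁻ ω, ENNReal.ofReal (f 1 (θ (n + 1) ω)) ∂μ)
            + (∫⁻ ω, ENNReal.ofReal (G 1 (θ (n + 1) ω)) ∂μ)
            + (∫⁻ ω, ENNReal.ofReal (r (n + 1) 1 ω) ∂μ) := by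
            have hmr : Measurable fun ω => ENNReal.ofReal (r (n + 1) 1 ω) :=
              (hrmeas (n + 1) 1).ennreal_ofReal
            have hmG : Measurable fun ω => ENNReal.ofReal (G 1 (θ (n + 1) ω)) :=
              ((hGmeas 1).comp (hθ (n + 1)).measurable).ennreal_ofReal
            have hmf : Measurable fun ω => ENNReal.ofReal (f 1 (θ (n + 1) ω)) :=
              ((hfmeas 1).comp (hθ (n + 1)).measurable).ennreal_ofReal
            rw [lintegral_add_right _ hmr, lintegral_add_right _ hmG,
              lintegral_add_right _ hmf]
        _ ≤ ((n : ℝ≥0∞) + 1) * K + (∫⁻ ω, ENNReal.ofReal (f 1 ω) ∂μ)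
            + (∫⁻ ω, ENNReal.ofReal (G 1 ω) ∂μ) + (1 + ENNReal.ofReal (C 1)) := by
            rw [e1, e2]
            gcongr
            exact hrK (n + 1) (by omega)
        _ = ((n : ℝ≥0∞) + 1) * K + K := by rw [hK]; ring
        _ = (((n + 1 : ℕ) : ℝ≥0∞) + 1) * K := by push_cast; ring
  -- negative part bound
  obtain ⟨c, hcmem⟩ := hc
  have hcb : ∀ n : ℕ, c ≤ (∫ ω, f (n + 1) ω ∂μ) / ((n : ℝ) + 1) := fun n => hcmem ⟨n, rfl⟩
  set v : ℕ → Ω → ℝ≥0∞ := fun n ω => ENNReal.ofReal (-(f n ω / (n : ℝ))) with hv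
  have hvmeas : ∀ n, Measurable (v n) := fun n =>
    (((hfmeas n).div_const _).neg).ennreal_ofReal
  set κ : ℝ := K.toReal - c with hκ
  have hQ : ∀ n : ℕ, (∫⁻ ω, v (n + 1) ω ∂μ) ≤ ENNReal.ofReal κ := by
    intro n
    set N : ℕ := n + 1 with hN
    have hN0 : (0 : ℝ) < N := by exact_mod_cast Nat.succ_pos n
    have hPfin : (∫⁻ ω, ENNReal.ofReal (f N ω) ∂μ) ≠ ∞ := hintf _ (hf N)
    have hQfin : (∫⁻ ω, ENNReal.ofReal (-(f N ω)) ∂μ) ≠ ∞ := hintf _ (hf N).neg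
    have hint := integral_eq_lintegral_pos_part_sub_lintegral_neg_part (hf N)
    have hPle : (∫⁻ ω, ENNReal.ofReal (f N ω) ∂μ).toReal ≤ (N : ℝ) * K.toReal := by
      have h1 : (((n : ℝ≥0∞) + 1) * K).toReal = (N : ℝ) * K.toReal := by
        rw [ENNReal.toReal_mul]
        congr 1
        rw [ENNReal.toReal_add (by simp) (by simp)]
        push_cast [hN]
        simp
      have h2 := ENNReal.toReal_mono (by
        exact ENNReal.mul_ne_top (by simp) hKne) (hP n)
      exact h2.trans_eq h1
    have hNr : (N : ℝ) = (n : ℝ) + 1 := by rw [hN]; push_cast; ring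
    have hcN : c * ((n : ℝ) + 1) ≤ ∫ ω, f N ω ∂μ := by
      have h3 := hcb n
      rw [le_div_iff₀ (by positivity : (0:ℝ) < (n : ℝ) + 1)] at h3
      exact h3
    have hQle : (∫⁻ ω, ENNReal.ofReal (-(f N ω)) ∂μ).toReal ≤ (N : ℝ) * κ := by
      have h4 : (∫⁻ ω, ENNReal.ofReal (-(f N ω)) ∂μ).toReal
          = (∫⁻ ω, ENNReal.ofReal (f N ω) ∂μ).toReal - ∫ ω, f N ω ∂μ := by linarith [hint]
      rw [h4, hκ, hNr]
      rw [hNr] at hPle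
      nlinarith [hPle, hcN]
    have hQ2 : (∫⁻ ω, ENNReal.ofReal (-(f N ω)) ∂μ) ≤ ENNReal.ofReal ((N : ℝ) * κ) := by
      rw [← ENNReal.ofReal_toReal hQfin]
      exact ENNReal.ofReal_le_ofReal hQle
    have hscale : (∫⁻ ω, v N ω ∂μ)
        = ENNReal.ofReal (1 / (N : ℝ)) * ∫⁻ ω, ENNReal.ofReal (-(f N ω)) ∂μ := by
      rw [← lintegral_const_mul (f := fun ω => ENNReal.ofReal (-(f N ω))) _ (((hfmeas N).neg).ennreal_ofReal)]
      apply lintegral_congr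
      intro ω
      rw [hv]
      rw [← ENNReal.ofReal_mul (by positivity : (0 : ℝ) ≤ 1 / (N : ℝ))]
      congr 1
      field_simp
    rw [hscale]
    calc ENNReal.ofReal (1 / (N : ℝ)) * ∫⁻ ω, ENNReal.ofReal (-(f N ω)) ∂μ
        ≤ ENNReal.ofReal (1 / (N : ℝ)) * ENNReal.ofReal ((N : ℝ) * κ) :=
          mul_le_mul_right hQ2 _
      _ = ENNReal.ofReal ((1 / (N : ℝ)) * ((N : ℝ) * κ)) :=
          (ENNReal.ofReal_mul (by positivity)).symm
      _ = ENNReal.ofReal κ := by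
          congr 1
          field_simp
  set Λ : Ω → ℝ≥0∞ := fun ω => atTop.liminf (fun n => v n ω) with hΛdef
  have hΛmeas : Measurable Λ := Measurable.liminf hvmeas
  have hΛle : (∫⁻ ω, Λ ω ∂μ) ≤ ENNReal.ofReal κ := by
    refine le_trans (lintegral_liminf_le hvmeas) ?_
    apply liminf_le_of_frequently_le'
    apply Eventually.frequently
    filter_upwards [eventually_ge_atTop 1] with n hn
    obtain ⟨m, rfl⟩ : ∃ m, n = m + 1 := ⟨n - 1, by omega⟩
    exact hQ m
  have hΛfin : ∀ᵐ ω ∂μ, Λ ω < ∞ :=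
    ae_lt_top hΛmeas (ne_of_lt (lt_of_le_of_lt hΛle ENNReal.ofReal_lt_top))
  -- main per-k bound
  have main : ∀ k : ℕ, 1 ≤ k →
      ∫ ω, ψ ω ∂μ ≤ (∫ ω, f k ω ∂μ) / k := by
    intro k hk
    obtain ⟨φ, hφint, hφeq, hφas, -⟩ := hbirk k hk
    -- a.e. error bounds
    have hDae : ∀ᵐ ω ∂μ, ∀ j : ℕ, ∀ᶠ m : ℕ in atTop,
        max (f (m * k) ω - ∑ i ∈ Finset.range m, f k ((θ k)^[i] ω)) 0 ≤ (m : ℝ) / (j + 1) := by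
      filter_upwards [hextra k hk] with ω hω
      intro j
      have h1 := hω.eventually_lt_const (show (0 : ℝ) < 1 / (j + 1) by positivity)
      filter_upwards [h1, eventually_ge_atTop 1] with m hm hm1
      have hm0 : (0 : ℝ) < m := by exact_mod_cast hm1
      have h2 := (div_lt_iff₀ hm0).1 hm
      calc max (f (m * k) ω - ∑ i ∈ Finset.range m, f k ((θ k)^[i] ω)) 0
          ≤ 1 / ((j : ℝ) + 1) * m := h2.le
        _ = (m : ℝ) / (j + 1) := one_div_mul_eq_div _ _
    have hXae : ∀ᵐ ω ∂μ, ∀ s : ℕ, ∀ j : ℕ, ∀ᶠ m : ℕ in atTop,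
        |f s (θ (m * k) ω) + G s (θ (m * k) ω)| ≤ (m : ℝ) / (j + 1) := by
      rw [ae_all_iff]
      intro s
      exact ae_eventually_comp_le ((hfmeas s).add (hGmeas s)) ((hf s).add (hGint s))
        (fun m => θ (m * k)) (fun m => hθ (m * k))
    have hrae : ∀ᵐ ω ∂μ, ∀ s : ℕ, 1 ≤ s → ∀ j : ℕ, ∀ᶠ m : ℕ in atTop,
        r (m * k) s ω ≤ (m : ℝ) / (j + 1) := by
      rw [ae_all_iff]
      intro s
      rcases Nat.eq_zero_or_pos s with hs | hs
      · exact ae_of_all _ (fun ω h => absurd h (by omega))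
      · have h5 := ae_eventually_r_le (μ := μ) (R := fun m => r (m * k) s) hα (hC0 s)
          (fun m hm => hr (m * k) s (Nat.mul_pos hm hk) hs) (fun m => hrmeas (m * k) s)
        filter_upwards [h5] with ω hω _
        exact hω
    have hgθae : ∀ᵐ ω ∂μ, ∀ s m : ℕ, g s (θ (m * k) ω) = G s (θ (m * k) ω) := by
      rw [ae_all_iff]
      intro s
      rw [ae_all_iff]
      intro m
      exact hcompeq s (m * k)
    have hup : ∀ᵐ ω ∂μ, ∀ ε : ℝ, 0 < ε → ∀ᶠ n : ℕ in atTop, f n ω / n ≤ φ ω / k + ε := by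
      filter_upwards [hφas, hDae, hXae, hrae, hgθae] with ω hAω hDω hXω hrω hgω
      intro ε hε
      refine assembleLemma hk (F := fun n => f n ω)
        (S := fun m => ∑ i ∈ Finset.range m, f k ((θ k)^[i] ω)) hAω ?_ ε hε
      intro δ hδ
      obtain ⟨j, hj⟩ := exists_nat_one_div_lt (show (0 : ℝ) < δ / 3 by linarith)
      have hj' : (1 : ℝ) / (j + 1) ≤ δ / 3 := hj.le
      have hall2 : ∀ᶠ m : ℕ in atTop, ∀ s ∈ Finset.range k,
          |f s (θ (m * k) ω) + G s (θ (m * k) ω)| ≤ (m : ℝ) / (j + 1) := by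
        rw [eventually_all_finset]
        intro s _
        exact hXω s j
      have hall3 : ∀ᶠ m : ℕ in atTop, ∀ s ∈ Finset.range k, 1 ≤ s →
          r (m * k) s ω ≤ (m : ℝ) / (j + 1) := by
        rw [eventually_all_finset]
        intro s _
        rcases Nat.eq_zero_or_pos s with h | h
        · subst h
          exact Eventually.of_forall (fun m h' => absurd h' (by omega))
        · exact (hrω s h j).mono (fun m hm _ => hm)
      filter_upwards [hDω j, hall2, hall3, eventually_ge_atTop 1] with m h1 h2 h3 hm1
      intro s hsk
      have hmnn : (0 : ℝ) ≤ m := Nat.cast_nonneg m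
      have h3δ : 3 * ((m : ℝ) / (j + 1)) ≤ δ * m := by
        have he : (m : ℝ) / (j + 1) = m * (1 / (j + 1)) := by ring
        rw [he]
        calc 3 * ((m : ℝ) * (1 / (j + 1))) ≤ 3 * ((m : ℝ) * (δ / 3)) := by
              apply mul_le_mul_of_nonneg_left (mul_le_mul_of_nonneg_left hj' hmnn) (by norm_num)
          _ = δ * m := by ring
      have hq : (0:ℝ) ≤ (m : ℝ) / (j + 1) := by positivity
      have hfmk : f (m * k) ω ≤ (∑ i ∈ Finset.range m, f k ((θ k)^[i] ω)) + (m : ℝ) / (j + 1) := by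
        have h6 := le_max_left (f (m * k) ω - ∑ i ∈ Finset.range m, f k ((θ k)^[i] ω)) 0
        linarith [h1]
      rcases Nat.eq_zero_or_pos s with h | h
      · subst h
        simp only [Nat.add_zero]
        linarith
      · have hsub' := hsub (m * k) s (Nat.mul_pos hm1 hk) h ω
        have hXb : f s (θ (m * k) ω) + g s (θ (m * k) ω) ≤ (m : ℝ) / (j + 1) := by
          rw [hgω s m]
          exact le_trans (le_abs_self _) (h2 s (Finset.mem_range.2 hsk))
        have hrb : r (m * k) s ω ≤ (m : ℝ) / (j + 1) := h3 s (Finset.mem_range.2 hsk) h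
        linarith
    -- pointwise consequences
    have hfinal : ∀ᵐ ω ∂μ, ψ ω ≤ φ ω / k ∧ ENNReal.ofReal (-(ψ ω)) ≤ Λ ω + 1 := by
      filter_upwards [hup, hΛfin] with ω hu hΛω
      have hΛne : Λ ω + 1 ≠ ∞ := by
        simp [hΛω.ne]
      have hfreq : ∃ᶠ n in atTop, -((Λ ω + 1).toReal) ≤ f n ω / n := by
        have h1 : Λ ω < Λ ω + 1 := ENNReal.lt_add_right hΛω.ne one_ne_zero
        have h2 : ∃ᶠ n in atTop, v n ω < Λ ω + 1 :=
          frequently_lt_of_liminf_lt (by isBoundedDefault) h1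
        apply h2.mono
        intro n hn
        rcases le_or_gt (-(f n ω / n)) 0 with h | h
        · have h7 : (0 : ℝ) ≤ (Λ ω + 1).toReal := ENNReal.toReal_nonneg
          linarith
        · have h4 : v n ω = ENNReal.ofReal (-(f n ω / n)) := rfl
          rw [h4] at hn
          have h5 := (ENNReal.ofReal_lt_iff_lt_toReal h.le hΛne).1 hn
          linarith
      have hcob : IsCoboundedUnder (· ≤ ·) atTop (fun n : ℕ => f n ω / n) :=
        IsCoboundedUnder.of_frequently_ge hfreq
      have hbdd : IsBoundedUnder (· ≤ ·) atTop (fun n : ℕ => f n ω / n) := by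
        refine ⟨φ ω / k + 1, ?_⟩
        rw [eventually_map]
        exact hu 1 one_pos
      constructor
      · apply _root_.le_of_forall_pos_le_add
        intro ε hε
        exact limsup_le_of_le hcob (hu ε hε)
      · have hlow : -((Λ ω + 1).toReal) ≤ ψ ω := le_limsup_of_frequently_le hfreq hbdd
        calc ENNReal.ofReal (-(ψ ω)) ≤ ENNReal.ofReal ((Λ ω + 1).toReal) :=
              ENNReal.ofReal_le_ofReal (by linarith)
          _ = Λ ω + 1 := ENNReal.ofReal_toReal hΛne
    -- integrability of ψ
    have habs : ∀ x : ℝ, ENNReal.ofReal |x| ≤ ENNReal.ofReal x + ENNReal.ofReal (-x) := by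
      intro x
      rcases le_total 0 x with h | h
      · rw [abs_of_nonneg h]
        exact le_self_add
      · rw [abs_of_nonpos h]
        exact le_add_self
    have hψint : Integrable ψ μ := by
      refine ⟨hψmeas.aestronglyMeasurable, ?_⟩
      have hfi1 : (∫⁻ ω, ENNReal.ofReal (ψ ω) ∂μ) < ∞ := by
        have h8 : (∫⁻ ω, ENNReal.ofReal (ψ ω) ∂μ) ≤ ∫⁻ ω, (‖φ ω / k‖₊ : ℝ≥0∞) ∂μ := by
          apply lintegral_mono_ae
          filter_upwards [hfinal] with ω hω
          exact le_trans (ENNReal.ofReal_le_ofReal hω.1) (Real.ofReal_le_enorm _)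
        exact lt_of_le_of_lt h8 (hφint.div_const (k : ℝ)).2
      have hfi2 : (∫⁻ ω, ENNReal.ofReal (-(ψ ω)) ∂μ) < ∞ := by
        have h9 : (∫⁻ ω, ENNReal.ofReal (-(ψ ω)) ∂μ) ≤ ∫⁻ ω, (Λ ω + 1) ∂μ :=
          lintegral_mono_ae (hfinal.mono fun ω hω => hω.2)
        have h10 : (∫⁻ ω, (Λ ω + 1) ∂μ) = (∫⁻ ω, Λ ω ∂μ) + 1 := by
          rw [lintegral_add_right _ measurable_const, lintegral_one, measure_univ]
        refine lt_of_le_of_lt h9 ?_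
        rw [h10]
        exact ENNReal.add_lt_top.2 ⟨lt_of_le_of_lt hΛle ENNReal.ofReal_lt_top, one_lt_top⟩
      show (∫⁻ ω, (‖ψ ω‖₊ : ℝ≥0∞) ∂μ) < ∞
      calc (∫⁻ ω, (‖ψ ω‖₊ : ℝ≥0∞) ∂μ)
          = ∫⁻ ω, ENNReal.ofReal |ψ ω| ∂μ := by
            apply lintegral_congr
            intro ω
            exact Real.enorm_eq_ofReal_abs _
        _ ≤ ∫⁻ ω, (ENNReal.ofReal (ψ ω) + ENNReal.ofReal (-(ψ ω))) ∂μ :=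
            lintegral_mono fun ω => habs _
        _ = (∫⁻ ω, ENNReal.ofReal (ψ ω) ∂μ) + ∫⁻ ω, ENNReal.ofReal (-(ψ ω)) ∂μ :=
            lintegral_add_left (hψmeas.ennreal_ofReal) _
        _ < ∞ := ENNReal.add_lt_top.2 ⟨hfi1, hfi2⟩
    calc ∫ ω, ψ ω ∂μ ≤ ∫ ω, φ ω / k ∂μ :=
          integral_mono_ae hψint (hφint.div_const _) (hfinal.mono fun ω hω => hω.1)
      _ = (∫ ω, φ ω ∂μ) / k := integral_div _ _
      _ = (∫ ω, f k ω ∂μ) / k := by rw [hφeq]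
  refine ⟨main, ?_⟩
  intro L hL
  have hev : ∀ᶠ n : ℕ in atTop, ∫ ω, ψ ω ∂μ ≤ (∫ ω, f n ω ∂μ) / n :=
    (eventually_ge_atTop 1).mono (fun n hn => main n hn)
  exact ge_of_tendsto hL hev
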